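/- (Equivalence of checking conditions, part (iii)) For a DAG G and pairwise disjoint node sets A, B, C, D: B is d-separated from C given D in the graph obtained from G^{σ(x̃_A)} by removing all edges into C \ anc(D), if and only if B is d-separated from C given A ∪ D in the graph obtained from G by removing all edges into A and all edges into C \ anc(D). -/
import Mathlib


/-- `b` is a collider on a path segment `a — b — c` for edge relation `E`:
both edges point into `b`. -/
def IsCollider {V : Type*} (E : V → V → Prop) (a b c : V) : Prop := E a b ∧ E c b

/-- The walk `f` (a sequence of vertices, consecutive ones adjacent in either direction)
is blocked at internal position `i` by the conditioning set `Z`: either `f i` is a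
non-collider lying in `Z`, or `f i` is a collider such that neither it nor any of its
descendants lies in `Z`. -/
def BlockedAt {V : Type*} (E : V → V → Prop) (Z : Set V) (f : ℕ → V) (i : ℕ) : Prop :=
  (¬ IsCollider E (f (i - 1)) (f i) (f (i + 1)) ∧ f i ∈ Z) ∨
  (IsCollider E (f (i - 1)) (f i) (f (i + 1)) ∧ f i ∉ Z ∧
    ∀ z ∈ Z, ¬ Relation.TransGen E (f i) z)

/-- d-separation: every walk from `B` to `C` (consecutive vertices adjacent in `E` in
either direction) is blocked by `Z` at some internal position. -/
def dSep {V : Type*} (E : V → V → Prop) (B C Z : Set V) : Prop :=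
  ∀ (n : ℕ) (f : ℕ → V), f 0 ∈ B → f n ∈ C →
    (∀ i < n, E (f i) (f (i + 1)) ∨ E (f (i + 1)) (f i)) →
    ∃ i, 0 < i ∧ i < n ∧ BlockedAt E Z f i

/-- The set of ancestors of `D`: nodes with a directed path of length ≥ 1 into `D`. -/
def ancSet {V : Type*} (E : V → V → Prop) (D : Set V) : Set V :=
  {v | ∃ d ∈ D, Relation.TransGen E v d}

section Aux

variable {V : Type*} (E : V → V → Prop) (A C2 : Set V)

/-- Targets of the "edges into A removed" relation are never in `A`. -/
lemma tg2_target {u z : V}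
    (h : Relation.TransGen (fun u v => (E u v ∧ v ∉ A) ∧ v ∉ C2) u z) : z ∉ A := by
  induction h with
  | single h => exact h.1.2
  | tail _ h _ => exact h.1.2

lemma tg2_to_tg1 {u z : V} (hu : u ∉ A)
    (h : Relation.TransGen (fun u v => (E u v ∧ v ∉ A) ∧ v ∉ C2) u z) :
    Relation.TransGen (fun u v => (E u v ∧ u ∉ A) ∧ v ∉ C2) u z := by
  induction h with
  | single h => exact .single ⟨⟨h.1.1, hu⟩, h.2⟩
  | tail hub h ih => exact ih.tail ⟨⟨h.1.1, tg2_target E A C2 hub⟩, h.2⟩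

lemma tg1_to_tg2 {u z : V}
    (h : Relation.TransGen (fun u v => (E u v ∧ u ∉ A) ∧ v ∉ C2) u z) :
    z ∉ A → Relation.TransGen (fun u v => (E u v ∧ v ∉ A) ∧ v ∉ C2) u z := by
  induction h with
  | single h => exact fun hz => .single ⟨⟨h.1.1, hz⟩, h.2⟩
  | tail _ h ih => exact fun hz => (ih h.1.2).tail ⟨⟨h.1.1, hz⟩, h.2⟩

lemma collider_iff {a b c : V} (ha : a ∉ A) (hb : b ∉ A) (hc : c ∉ A) :
    IsCollider (fun u v => (E u v ∧ u ∉ A) ∧ v ∉ C2) a b c ↔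
    IsCollider (fun u v => (E u v ∧ v ∉ A) ∧ v ∉ C2) a b c := by
  constructor
  · rintro ⟨⟨⟨h1, _⟩, h2⟩, ⟨h3, _⟩, h4⟩; exact ⟨⟨⟨h1, hb⟩, h2⟩, ⟨h3, hb⟩, h4⟩
  · rintro ⟨⟨⟨h1, _⟩, h2⟩, ⟨h3, _⟩, h4⟩; exact ⟨⟨⟨h1, ha⟩, h2⟩, ⟨h3, hc⟩, h4⟩

variable (D : Set V)

lemma blocked12 (hAD : Disjoint A D) (f : ℕ → V) (i : ℕ)
    (ha : f (i - 1) ∉ A) (hb : f i ∉ A) (hc : f (i + 1) ∉ A)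
    (h : BlockedAt (fun u v => (E u v ∧ u ∉ A) ∧ v ∉ C2) D f i) :
    BlockedAt (fun u v => (E u v ∧ v ∉ A) ∧ v ∉ C2) (A ∪ D) f i := by
  rcases h with ⟨hnc, hmem⟩ | ⟨hcol, hnot, hdesc⟩
  · exact Or.inl ⟨fun hcol => hnc ((collider_iff E A C2 ha hb hc).mpr hcol), Or.inr hmem⟩
  · refine Or.inr ⟨(collider_iff E A C2 ha hb hc).mp hcol, ?_, ?_⟩
    · rintro (h | h); exacts [hb h, hnot h]
    · rintro z (hz | hz) htg
      · exact tg2_target E A C2 htg hz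
      · exact hdesc z hz (tg2_to_tg1 E A C2 hb htg)

lemma blocked21 (hAD : Disjoint A D) (f : ℕ → V) (i : ℕ)
    (ha : f (i - 1) ∉ A) (hb : f i ∉ A) (hc : f (i + 1) ∉ A)
    (h : BlockedAt (fun u v => (E u v ∧ v ∉ A) ∧ v ∉ C2) (A ∪ D) f i) :
    BlockedAt (fun u v => (E u v ∧ u ∉ A) ∧ v ∉ C2) D f i := by
  rcases h with ⟨hnc, hmem⟩ | ⟨hcol, hnot, hdesc⟩
  · refine Or.inl ⟨fun hcol => hnc ((collider_iff E A C2 ha hb hc).mp hcol), ?_⟩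
    rcases hmem with h | h; exacts [absurd h hb, h]
  · refine Or.inr ⟨(collider_iff E A C2 ha hb hc).mpr hcol, fun h => hnot (Or.inr h), ?_⟩
    intro z hz htg
    exact hdesc z (Or.inr hz)
      (tg1_to_tg2 E A C2 htg (fun hzA => Set.disjoint_left.mp hAD hzA hz))

end Aux

/-- Equivalence of checking conditions, part (iii). For a DAG `G` and
pairwise disjoint node sets `A, B, C, D`, with `C₂ = C \ anc(D)`: `B` is d-separated from
`C` given `D` in the graph obtained from `G^{σ(x̃_A)}` (edges out of `A` removed) by
removing all edges into `C₂`, iff `B` is d-separated from `C` given `A ∪ D` in the graph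
obtained from `G` by removing all edges into `A` and all edges into `C₂`. -/
theorem dsep_equivalence_iii {V : Type*} (E : V → V → Prop)
    (hacyc : ∀ v, ¬ Relation.TransGen E v v)
    (A B C D : Set V)
    (hAB : Disjoint A B) (hAC : Disjoint A C) (hAD : Disjoint A D)
    (hBC : Disjoint B C) (hBD : Disjoint B D) (hCD : Disjoint C D) :
    dSep (fun u v => (E u v ∧ u ∉ A) ∧ v ∉ C \ ancSet E D) B C D
      ↔ dSep (fun u v => (E u v ∧ v ∉ A) ∧ v ∉ C \ ancSet E D) B C (A ∪ D) := by
  set C2 : Set V := C \ ancSet E D with hC2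
  constructor
  · intro h1 n f hB hC hadj
    by_cases hA : ∃ i, 0 < i ∧ i < n ∧ f i ∈ A
    · obtain ⟨i, hi0, hin, hfi⟩ := hA
      refine ⟨i, hi0, hin, Or.inl ⟨?_, Or.inl hfi⟩⟩
      rintro ⟨⟨⟨_, h⟩, _⟩, _⟩; exact h hfi
    · push_neg at hA
      have hnA : ∀ i ≤ n, f i ∉ A := by
        intro i hi
        rcases Nat.eq_zero_or_pos i with h0 | h0
        · rw [h0]; exact fun h => Set.disjoint_left.mp hAB h hB
        rcases eq_or_lt_of_le hi with h | h
        · rw [h]; exact fun h => Set.disjoint_left.mp hAC h hC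
        · exact hA i h0 h
      have hwalk : ∀ i < n,
          (fun u v => (E u v ∧ u ∉ A) ∧ v ∉ C2) (f i) (f (i + 1)) ∨
          (fun u v => (E u v ∧ u ∉ A) ∧ v ∉ C2) (f (i + 1)) (f i) := by
        intro i hi
        rcases hadj i hi with ⟨⟨h1, _⟩, h2⟩ | ⟨⟨h1, _⟩, h2⟩
        · exact Or.inl ⟨⟨h1, hnA i (le_of_lt hi)⟩, h2⟩
        · exact Or.inr ⟨⟨h1, hnA (i + 1) hi⟩, h2⟩
      obtain ⟨i, hi0, hin, hb⟩ := h1 n f hB hC hwalk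
      refine ⟨i, hi0, hin, blocked12 E A C2 D hAD f i ?_ ?_ ?_ hb⟩
      · exact hnA (i - 1) (le_trans (Nat.sub_le i 1) (le_of_lt hin))
      · exact hnA i (le_of_lt hin)
      · exact hnA (i + 1) hin
  · intro h2 n f hB hC hadj
    by_cases hA : ∃ i, 0 < i ∧ i < n ∧ f i ∈ A
    · obtain ⟨i, hi0, hin, hfi⟩ := hA
      have hcol : IsCollider (fun u v => (E u v ∧ u ∉ A) ∧ v ∉ C2)
          (f (i - 1)) (f i) (f (i + 1)) := by
        constructor
        · rcases hadj (i - 1) (lt_of_le_of_lt (Nat.sub_le i 1) hin) with h | h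
          · rwa [Nat.sub_add_cancel hi0] at h
          · rw [Nat.sub_add_cancel hi0] at h
            exact absurd h.1.2 (not_not_intro hfi)
        · rcases hadj i hin with h | h
          · exact absurd h.1.2 (not_not_intro hfi)
          · exact h
      refine ⟨i, hi0, hin, Or.inr ⟨hcol, fun h => Set.disjoint_left.mp hAD hfi h, ?_⟩⟩
      intro z hz htg
      obtain ⟨w, h, -⟩ := (Relation.TransGen.head'_iff).mp htg
      exact h.1.2 hfi
    · push_neg at hA
      have hnA : ∀ i ≤ n, f i ∉ A := by
        intro i hi
        rcases Nat.eq_zero_or_pos i with h0 | h0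
        · rw [h0]; exact fun h => Set.disjoint_left.mp hAB h hB
        rcases eq_or_lt_of_le hi with h | h
        · rw [h]; exact fun h => Set.disjoint_left.mp hAC h hC
        · exact hA i h0 h
      have hwalk : ∀ i < n,
          (fun u v => (E u v ∧ v ∉ A) ∧ v ∉ C2) (f i) (f (i + 1)) ∨
          (fun u v => (E u v ∧ v ∉ A) ∧ v ∉ C2) (f (i + 1)) (f i) := by
        intro i hi
        rcases hadj i hi with ⟨⟨h1, _⟩, h2⟩ | ⟨⟨h1, _⟩, h2⟩
        · exact Or.inl ⟨⟨h1, hnA (i + 1) hi⟩, h2⟩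
        · exact Or.inr ⟨⟨h1, hnA i (le_of_lt hi)⟩, h2⟩
      obtain ⟨i, hi0, hin, hb⟩ := h2 n f hB hC hwalk
      refine ⟨i, hi0, hin, blocked21 E A C2 D hAD f i ?_ ?_ ?_ hb⟩
      · exact hnA (i - 1) (le_trans (Nat.sub_le i 1) (le_of_lt hin))
      · exact hnA i (le_of_lt hin)
      · exact hnA (i + 1) hin
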